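/- arXiv:2002.12422 — 10 statements merged into one kernel-verified Lean document; each statement's English description precedes it below -/
import Mathlib

section
/- Let (X,d) be a metric space and let δ be an asymmetric metric on X satisfying condition (bl). Then the map ι : X → (X → ℝ) given by ι(p) = δ(p,·) (i.e. ι(p)(x) = δ(p,x)) is a topological embedding, where the space of real-valued functions on X carries the product topology (the topology of pointwise convergence). -/
/-- Let `(X,d)` be a metric space and `δ` an asymmetric metric on `X`
satisfying condition (bl). Then the map `p ↦ δ(p,·)` is a topological embedding of `X`
into the space of real-valued functions on `X` with the topology of pointwise convergence
(the product topology). -/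
theorem gromov_map_embedding_pointwise
    {X : Type*} [MetricSpace X] (δ : X → X → ℝ)
    (hpos : ∀ u v, 0 ≤ δ u v)
    (hzero : ∀ u v, δ u v = 0 ↔ u = v)
    (htri : ∀ u v w, δ u w ≤ δ u v + δ v w)
    (hbl : ∃ α > (0 : ℝ), ∃ β > (0 : ℝ), ∀ p q,
      dist p q ≤ α * δ p q ∧ δ p q ≤ β * dist p q) :
    Topology.IsEmbedding (fun p : X => (fun x => δ p x : X → ℝ)) := by
  obtain ⟨α, hα, β, hβ, hab⟩ := hbl
  -- continuity of each coordinate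
  have hlip : ∀ x : X, LipschitzWith β.toNNReal (fun p => δ p x) := by
    intro x
    rw [lipschitzWith_iff_dist_le_mul]
    intro p q
    rw [Real.dist_eq, Real.coe_toNNReal β hβ.le, abs_sub_le_iff]
    constructor
    · have h1 : δ p x ≤ δ p q + δ q x := htri p q x
      have h2 : δ p q ≤ β * dist p q := (hab p q).2
      linarith
    · have h1 : δ q x ≤ δ q p + δ p x := htri q p x
      have h2 : δ q p ≤ β * dist q p := (hab q p).2
      rw [dist_comm q p] at h2
      linarith
  have hcont : Continuous (fun p : X => (fun x => δ p x : X → ℝ)) :=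
    continuous_pi fun x => (hlip x).continuous
  refine ⟨?_, ?_⟩
  · rw [Topology.isInducing_iff_nhds]
    intro a
    apply le_antisymm
    · exact hcont.continuousAt.le_comap
    · -- comap ≤ nhds a : if δ · x → δ a x for all x, then d(·,a) → 0
      rw [Filter.le_def]
      intro s hs
      rw [Metric.mem_nhds_iff] at hs
      obtain ⟨ε, hε, hball⟩ := hs
      have hev : Filter.Tendsto (fun p => δ p a)
          (Filter.comap (fun p : X => (fun x => δ p x : X → ℝ)) (nhds (fun x => δ a x)))
          (nhds (δ a a)) := by
        have := (continuous_apply a).continuousAt (x := (fun x => δ a x : X → ℝ))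
        exact this.tendsto.comp Filter.tendsto_comap
      have haa : δ a a = 0 := (hzero a a).2 rfl
      rw [haa] at hev
      have : ∀ᶠ p in Filter.comap (fun p : X => (fun x => δ p x : X → ℝ))
          (nhds (fun x => δ a x)), δ p a < ε / α := by
        have := hev.eventually (eventually_lt_nhds (by positivity : (0:ℝ) < ε / α))
        exact this
      filter_upwards [this] with p hp
      apply hball
      rw [Metric.mem_ball]
      calc dist p a ≤ α * δ p a := (hab p a).1
        _ < α * (ε / α) := by exact mul_lt_mul_of_pos_left hp hα
        _ = ε := by field_simp
  · intro p q hpq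
    have := congrFun hpq q
    simp only at this
    rw [(hzero q q).2 rfl] at this
    exact (hzero p q).1 this
end

section
/- Let (X,d) be a metric space, let o ∈ X, and let δ be an asymmetric metric on X satisfying conditions (bl) and (ic). Then the map X → (X → ℝ) given by p ↦ (x ↦ δ(p,x) − δ(p,o)) is a topological embedding, where the space of real-valued functions on X carries the topology of uniform convergence on bounded subsets of X. -/
open Bornology UniformConvergence

/-- Let `(X,d)` be a metric space, `o ∈ X`, and `δ` an asymmetric metric on
`X` satisfying conditions (bl) and (ic). Then the map `p ↦ (x ↦ δ(p,x) − δ(p,o))` is a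
topological embedding of `X` into the space of real-valued functions on `X` carrying the
topology of uniform convergence on bounded subsets of `X`. -/
theorem normalized_gromov_map_embedding
    {X : Type*} [MetricSpace X] (o : X) (δ : X → X → ℝ)
    (hpos : ∀ u v, 0 ≤ δ u v)
    (hzero : ∀ u v, δ u v = 0 ↔ u = v)
    (htri : ∀ u v w, δ u w ≤ δ u v + δ v w)
    (hbl : ∃ α > (0 : ℝ), ∃ β > (0 : ℝ), ∀ p q,
      dist p q ≤ α * δ p q ∧ δ p q ≤ β * dist p q)
    (hic : ∀ p q : X, ∀ s : ℝ, s ∈ Set.Icc 0 (δ p q) →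
      ∃ z : X, δ p q = δ p z + δ z q ∧ δ p z = s) :
    Topology.IsEmbedding (fun p : X =>
      UniformOnFun.ofFun {s : Set X | IsBounded s} (fun x => δ p x - δ p o)) := by
  obtain ⟨a, ha, b, hb, hab⟩ := hbl
  set 𝔖 : Set (Set X) := {s : Set X | IsBounded s} with h𝔖
  set F : X → (X →ᵤ[𝔖] ℝ) :=
    fun p => UniformOnFun.ofFun 𝔖 (fun x => δ p x - δ p o) with hF
  have hne : 𝔖.Nonempty := ⟨∅, isBounded_empty⟩
  have hdir : DirectedOn (· ⊆ ·) 𝔖 := fun S hS T hT =>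
    ⟨S ∪ T, hS.union hT, Set.subset_union_left, Set.subset_union_right⟩
  -- basic estimate: |δ p x - δ q x| ≤ max(δ p q, δ q p)
  have key : ∀ p q x : X, |δ p x - δ q x| ≤ δ p q + δ q p := by
    intro p q x
    rw [abs_sub_le_iff]
    constructor
    · have := htri p q x
      have h2 := hpos q p
      linarith
    · have := htri q p x
      have h2 := hpos p q
      linarith
  have hFval : ∀ p q x : X,
      (UniformOnFun.toFun 𝔖 (F p) x : ℝ) = δ p x - δ p o := fun _ _ _ => rfl
  constructor
  · -- inducing
    rw [Topology.isInducing_iff_nhds]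
    intro p
    have hbasis := UniformOnFun.hasBasis_nhds_of_basis X ℝ 𝔖 (F p) hne hdir
      Metric.uniformity_basis_dist
    refine (Metric.nhds_basis_ball.ext (hbasis.comap F) ?_ ?_)
    · -- ∀ r > 0, ∃ (S, ε), F ⁻¹' gen ⊆ ball p r
      intro r hr
      refine ⟨⟨Metric.closedBall p (r / 2), r / (4 * a)⟩,
        ⟨Metric.isBounded_closedBall, by positivity⟩, ?_⟩
      intro q hq
      simp only [Set.mem_preimage, UniformOnFun.gen, Set.mem_setOf_eq] at hq
      -- hq : ∀ x ∈ closedBall p (r/2), dist (F q x) (F p x) < r / (4a)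
      have hq' : ∀ x ∈ Metric.closedBall p (r / 2),
          |(δ q x - δ q o) - (δ p x - δ p o)| < r / (4 * a) := by
        intro x hx
        have := hq x hx
        rwa [Real.dist_eq] at this
      rw [Metric.mem_ball, dist_comm]
      by_contra hcon
      push_neg at hcon
      -- dist p q ≥ r
      set s : ℝ := r / (2 * a) with hs
      have hs0 : 0 < s := by positivity
      have hsle : s ≤ δ q p := by
        have h1 : dist q p ≤ a * δ q p := (hab q p).1
        have h2 : r ≤ dist q p := by rwa [dist_comm]
        rw [hs, div_le_iff₀ (by positivity)]
        nlinarith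
      obtain ⟨z, hz1, hz2⟩ := hic q p (δ q p - s) ⟨by linarith, by linarith [hs0]⟩
      have hzp : δ z p = s := by linarith
      have hzball : z ∈ Metric.closedBall p (r / 2) := by
        rw [Metric.mem_closedBall]
        calc dist z p ≤ a * δ z p := (hab z p).1
        _ = a * (r / (2 * a)) := by rw [hzp, hs]
        _ = r / 2 := by field_simp
      have hpball : p ∈ Metric.closedBall p (r / 2) := by
        simp [Metric.mem_closedBall]; positivity
      have hA := hq' z hzball
      have hB := hq' p hpball
      -- A + B' where B' = -( value at p difference )
      have hApB : ((δ q z - δ q o) - (δ p z - δ p o))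
          + ((δ p p - δ p o) - (δ q p - δ q o)) = -s - δ p z + δ p p := by
        have hqz : δ q z = δ q p - s := by linarith
        rw [hqz]; ring
      have hpp : δ p p = 0 := (hzero p p).2 rfl
      have hAbs1 : s + δ p z ≤ |(δ q z - δ q o) - (δ p z - δ p o)|
          + |(δ p p - δ p o) - (δ q p - δ q o)| := by
        have h1 := neg_abs_le (((δ q z - δ q o) - (δ p z - δ p o)))
        have h2 := neg_abs_le (((δ p p - δ p o) - (δ q p - δ q o)))
        linarith [hApB, hpp]
      have hB' : |(δ p p - δ p o) - (δ q p - δ q o)|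
          = |(δ q p - δ q o) - (δ p p - δ p o)| := abs_sub_comm _ _
      have hdpz := hpos p z
      have : s < 2 * (r / (4 * a)) := by
        have := hq' p hpball
        rw [hB'] at hAbs1
        nlinarith [hA, this]
      rw [hs] at this
      have : r / (2 * a) < r / (2 * a) := by
        calc r / (2 * a) < 2 * (r / (4 * a)) := this
        _ = r / (2 * a) := by field_simp; ring
      exact absurd this (lt_irrefl _)
    · -- continuity direction: ∀ (S, ε), ∃ r > 0, ball p r ⊆ F ⁻¹' gen
      rintro ⟨S, ε⟩ ⟨hS, hε⟩
      refine ⟨ε / (4 * b + 1), by positivity, ?_⟩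
      intro q hq
      simp only [Set.mem_preimage, UniformOnFun.gen, Set.mem_setOf_eq]
      intro x _
      rw [Real.dist_eq]
      have h1 : |δ q x - δ p x| ≤ δ q p + δ p q := key q p x
      have h2 : |δ q o - δ p o| ≤ δ q p + δ p q := key q p o
      have h3 : δ q p ≤ b * dist q p := (hab q p).2
      have h4 : δ p q ≤ b * dist p q := (hab p q).2
      have h5 : dist p q < ε / (4 * b + 1) := by
        rw [Metric.mem_ball, dist_comm] at hq; exact hq
      have h6 : dist q p = dist p q := dist_comm q p
      have habs : |(δ q x - δ q o) - (δ p x - δ p o)|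
          ≤ |δ q x - δ p x| + |δ q o - δ p o| := by
        have := abs_sub (δ q x - δ p x) (δ q o - δ p o)
        calc |(δ q x - δ q o) - (δ p x - δ p o)|
            = |(δ q x - δ p x) - (δ q o - δ p o)| := by ring_nf
          _ ≤ |δ q x - δ p x| + |δ q o - δ p o| := abs_sub _ _
      have hfin : 2 * (δ q p + δ p q) < ε := by
        have hbd : dist p q * (4 * b + 1) < ε := by
          rw [← lt_div_iff₀ (by positivity)]
          exact h5
        nlinarith [dist_nonneg (x := p) (y := q)]
      calc |(δ q x - δ q o) - (δ p x - δ p o)|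
          ≤ |δ q x - δ p x| + |δ q o - δ p o| := habs
        _ ≤ (δ q p + δ p q) + (δ q p + δ p q) := add_le_add h1 h2
        _ = 2 * (δ q p + δ p q) := by ring
        _ < ε := hfin
  · -- injective
    intro p q hpq
    have hfun : ∀ x, δ p x - δ p o = δ q x - δ q o := by
      intro x
      have := congrArg (fun f => UniformOnFun.toFun 𝔖 f x) hpq
      exact this
    have h1 := hfun p
    have h2 := hfun q
    have hpp : δ p p = 0 := (hzero p p).2 rfl
    have hqq : δ q q = 0 := (hzero q q).2 rfl
    have hsum : δ p q + δ q p = 0 := by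
      rw [hpp] at h1; rw [hqq] at h2; linarith
    have hpq0 : δ p q = 0 := le_antisymm (by linarith [hpos q p]) (hpos p q)
    exact (hzero p q).1 hpq0
end

section
/- Let (X,d) be a metric space, let o ∈ X, and let δ be an asymmetric metric on X satisfying condition (bl). Then the set F = {x ↦ δ(p,x) − δ(p,o) : p ∈ X} of real-valued functions on X has compact closure in the space of continuous real-valued functions on X with the topology of uniform convergence on compact subsets of X; moreover, this closure coincides as a set with the closure of F in the product topology (the topology of pointwise convergence). -/
open Set Topology

/-- Let `(X,d)` be a metric space, `o ∈ X`, and `δ` an asymmetric metric on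
`X` satisfying condition (bl). Then the set `F = {x ↦ δ(p,x) − δ(p,o) : p ∈ X}` has compact
closure in `C(X,ℝ)` with the compact-open topology (= topology of uniform convergence on
compact sets), and this closure coincides as a set of functions with the closure of `F` in
the product topology on `X → ℝ`. -/
theorem normalized_distance_functions_compact_closure
    {X : Type*} [MetricSpace X] (o : X) (δ : X → X → ℝ)
    (hpos : ∀ u v, 0 ≤ δ u v)
    (hzero : ∀ u v, δ u v = 0 ↔ u = v)
    (htri : ∀ u v w, δ u w ≤ δ u v + δ v w)
    (hbl : ∃ α > (0 : ℝ), ∃ β > (0 : ℝ), ∀ p q,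
      dist p q ≤ α * δ p q ∧ δ p q ≤ β * dist p q) :
    IsCompact (closure {f : C(X, ℝ) | ∃ p : X, ∀ x, f x = δ p x - δ p o}) ∧
    (fun f : C(X, ℝ) => (f : X → ℝ)) ''
        closure {f : C(X, ℝ) | ∃ p : X, ∀ x, f x = δ p x - δ p o}
      = closure {g : X → ℝ | ∃ p : X, g = fun x => δ p x - δ p o} := by
  obtain ⟨a, ha, β, hβ, hab⟩ := hbl
  set S : Set C(X, ℝ) := {f : C(X, ℝ) | ∃ p : X, ∀ x, f x = δ p x - δ p o} with hS
  -- key Lipschitz-type estimate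
  have key : ∀ p x y : X, δ p x - δ p y ≤ β * dist x y := by
    intro p x y
    have h1 := htri p y x
    have h2 := (hab y x).2
    rw [dist_comm y x] at h2
    linarith
  have hdist : ∀ p x y : X, dist (δ p x - δ p o) (δ p y - δ p o) ≤ β * dist x y := by
    intro p x y
    rw [Real.dist_eq, abs_sub_le_iff]
    constructor
    · have := key p x y; linarith
    · have := key p y x; rw [dist_comm x y]; linarith
  -- pointwise bound
  have hbound : ∀ p x : X, |δ p x - δ p o| ≤ β * dist x o := by
    intro p x
    rw [abs_sub_le_iff]
    constructor
    · exact key p x o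
    · have := key p o x; rwa [dist_comm o x] at this
  -- equicontinuity of the family indexed by S
  have heq : Equicontinuous (fun f : S => ((f : C(X, ℝ)) : X → ℝ)) := by
    apply Metric.equicontinuous_of_continuity_modulus (fun t => β * t)
    · exact (continuous_const.mul continuous_id).tendsto' 0 0 (by simp)
    · rintro x y ⟨f, p, hp⟩
      simp only [hp x, hp y]
      exact hdist p x y
  -- closed embedding into the uniform-on-compacts function space
  have hclemb : IsClosedEmbedding
      (UniformOnFun.ofFun {K : Set X | IsCompact K} ∘ (fun f : C(X, ℝ) => (f : X → ℝ))) := by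
    have h1 := ContinuousMap.isUniformEmbedding_toUniformOnFunIsCompact (α := X) (β := ℝ)
    refine ⟨h1.isEmbedding, ?_⟩
    rw [show (UniformOnFun.ofFun {K : Set X | IsCompact K} ∘ (fun f : C(X, ℝ) => (f : X → ℝ)))
        = ContinuousMap.toUniformOnFunIsCompact from rfl,
      ContinuousMap.range_toUniformOnFunIsCompact]
    exact UniformOnFun.isClosed_setOf_continuous CompactlyCoherentSpace.isCoherentWith
  -- Arzelà–Ascoli
  have hcpt : IsCompact (closure S) := by
    apply ArzelaAscoli.isCompact_closure_of_isClosedEmbedding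
      (F := fun f : C(X, ℝ) => (f : X → ℝ)) (fun K hK => hK) hclemb
    · intro K _
      exact (heq.equicontinuousOn K)
    · intro K _ x _
      refine ⟨Icc (-(β * dist x o)) (β * dist x o), isCompact_Icc, ?_⟩
      rintro f ⟨p, hp⟩
      rw [hp x]
      have := hbound p x
      rw [abs_le] at this
      exact this
  refine ⟨hcpt, ?_⟩
  -- Part 2: identification of the closures
  have hcoe : Continuous (fun f : C(X, ℝ) => (f : X → ℝ)) :=
    continuous_pi fun x => continuous_eval_const x
  have himage : (fun f : C(X, ℝ) => (f : X → ℝ)) '' S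
      = {g : X → ℝ | ∃ p : X, g = fun x => δ p x - δ p o} := by
    ext g
    constructor
    · rintro ⟨f, ⟨p, hp⟩, rfl⟩
      exact ⟨p, funext hp⟩
    · rintro ⟨p, rfl⟩
      have hc : Continuous (fun x => δ p x - δ p o) := by
        apply LipschitzWith.continuous (K := ⟨β, hβ.le⟩)
        apply LipschitzWith.of_dist_le_mul
        intro x y
        exact hdist p x y
      exact ⟨⟨_, hc⟩, ⟨p, fun x => rfl⟩, rfl⟩
  have hcptim : IsCompact ((fun f : C(X, ℝ) => (f : X → ℝ)) '' closure S) :=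
    hcpt.image hcoe
  apply subset_antisymm
  · rw [← himage]
    exact (image_closure_subset_closure_image hcoe).trans (closure_mono subset_rfl)
  · apply closure_minimal
    · rw [← himage]
      exact image_mono subset_closure
    · exact hcptim.isClosed
end

section
/- Let (X,d) be a metric space, let o ∈ X, and let δ be an asymmetric metric on X satisfying conditions (bl) and (ic). (a) For every normalized horofunction φ of (X, d, δ) with base point o, there exists p ∈ *X such that for every x ∈ X the hyperreal *δ(p,x) − *δ(p,o) is finite with standard part φ(x). (b) If moreover every bounded subset of X is totally bounded (X is almost proper), then conversely, for every p ∈ *X the function h_p : X → ℝ defined by h_p(x) = st(*δ(p,x) − *δ(p,o)) is a normalized horofunction of (X, d, δ) with base point o. -/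
open Bornology Filter

/-- The extension `*δ : *X × *X → *ℝ` of a map `δ : X × X → ℝ` to the ultrapower of `X`
with respect to the ultrafilter `hyperfilter ℕ`. -/
noncomputable def starMap₂ {X : Type*} (δ : X → X → ℝ)
    (p q : Filter.Germ (Filter.hyperfilter ℕ : Filter ℕ) X) : ℝ* :=
  p.map₂ δ q

/-- Let `(X,d)` be a metric space, `o ∈ X`, and `δ` an asymmetric metric
satisfying (bl) and (ic).
(a) For every normalized horofunction `φ` (an element of the closure of
`{x ↦ δ(p,x) − δ(p,o) : p ∈ X}` in the topology of uniform convergence on bounded sets)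
there exists `p ∈ *X` such that for every `x ∈ X` the hyperreal
`*δ(p,x) − *δ(p,o)` is finite with standard part `φ(x)`.
(b) If every bounded subset of `X` is totally bounded, then conversely every function
`x ↦ st(*δ(p,x) − *δ(p,o))`, for `p ∈ *X`, is a normalized horofunction. -/
theorem horofunctions_via_ultrapower
    {X : Type*} [MetricSpace X] (o : X) (δ : X → X → ℝ)
    (hpos : ∀ u v, 0 ≤ δ u v)
    (hzero : ∀ u v, δ u v = 0 ↔ u = v)
    (htri : ∀ u v w, δ u w ≤ δ u v + δ v w)
    (hbl : ∃ α > (0 : ℝ), ∃ β > (0 : ℝ), ∀ p q,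
      dist p q ≤ α * δ p q ∧ δ p q ≤ β * dist p q)
    (hic : ∀ p q : X, ∀ s : ℝ, s ∈ Set.Icc 0 (δ p q) →
      ∃ z : X, δ p q = δ p z + δ z q ∧ δ p z = s) :
    (∀ φ : X → ℝ,
      UniformOnFun.ofFun {s : Set X | IsBounded s} φ ∈
        closure (UniformOnFun.ofFun {s : Set X | IsBounded s} ''
          {f : X → ℝ | ∃ p : X, f = fun x => δ p x - δ p o}) →
      ∃ p : Filter.Germ (Filter.hyperfilter ℕ : Filter ℕ) X,
        ∀ x : X, Hyperreal.IsSt (starMap₂ δ p ↑x - starMap₂ δ p ↑o) (φ x)) ∧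
    ((∀ s : Set X, IsBounded s → TotallyBounded s) →
      ∀ p : Filter.Germ (Filter.hyperfilter ℕ : Filter ℕ) X,
        UniformOnFun.ofFun {s : Set X | IsBounded s}
            (fun x => Hyperreal.st (starMap₂ δ p ↑x - starMap₂ δ p ↑o)) ∈
          closure (UniformOnFun.ofFun {s : Set X | IsBounded s} ''
            {f : X → ℝ | ∃ p : X, f = fun x => δ p x - δ p o})) := by
  classical
  obtain ⟨α, hα, β, hβ, hαβ⟩ := hbl
  set 𝔖 : Set (Set X) := {s : Set X | IsBounded s} with h𝔖
  have hne : 𝔖.Nonempty := ⟨∅, isBounded_empty⟩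
  have hdir : DirectedOn (· ⊆ ·) 𝔖 := fun s hs t ht =>
    ⟨s ∪ t, hs.union ht, Set.subset_union_left, Set.subset_union_right⟩
  -- a uniform Lipschitz-type bound for the functions `x ↦ δ q x - δ q o`
  have key : ∀ q x y : X, |(δ q x - δ q o) - (δ q y - δ q o)| ≤ β * dist x y := by
    intro q x y
    have h1 : δ q x - δ q y ≤ δ y x := by
      have := htri q y x; linarith
    have h2 : δ q y - δ q x ≤ δ x y := by
      have := htri q x y; linarith
    have h3 : δ y x ≤ β * dist y x := (hαβ y x).2
    have h4 : δ x y ≤ β * dist x y := (hαβ x y).2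
    rw [abs_le]
    constructor
    · rw [dist_comm x y] at h4 ⊢; nlinarith [dist_comm y x]
    · rw [dist_comm y x] at h3; nlinarith
  constructor
  · -- part (a)
    intro φ hφ
    rw [mem_closure_iff_nhds_basis
      (UniformOnFun.hasBasis_nhds_of_basis X ℝ 𝔖 (UniformOnFun.ofFun 𝔖 φ) hne hdir
        Metric.uniformity_basis_dist)] at hφ
    have hsel : ∀ n : ℕ, ∃ q : X, ∀ x ∈ Metric.closedBall o (n + 1 : ℝ),
        dist (δ q x - δ q o) (φ x) < 1 / (n + 1) := by
      intro n
      obtain ⟨y, hy_mem, hy⟩ := hφ (Metric.closedBall o (n + 1 : ℝ), 1 / (n + 1))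
        ⟨Metric.isBounded_closedBall, by positivity⟩
      obtain ⟨g, ⟨q, rfl⟩, rfl⟩ := hy_mem
      exact ⟨q, fun x hx => hy x hx⟩
    choose q hq using hsel
    refine ⟨(↑q : Filter.Germ (Filter.hyperfilter ℕ : Filter ℕ) X), fun x => ?_⟩
    have heq : starMap₂ δ (↑q) ↑x - starMap₂ δ (↑q) ↑o =
        Hyperreal.ofSeq (fun n => δ (q n) x - δ (q n) o) := rfl
    rw [heq]
    apply Hyperreal.isSt_of_tendsto
    rw [tendsto_iff_dist_tendsto_zero]
    refine squeeze_zero' (Eventually.of_forall fun n => dist_nonneg)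
      ?_ (tendsto_one_div_add_atTop_nhds_zero_nat)
    · filter_upwards [eventually_ge_atTop (Nat.ceil (dist x o))] with n hn
      have hxball : x ∈ Metric.closedBall o (n + 1 : ℝ) := by
        rw [Metric.mem_closedBall]
        calc dist x o ≤ (Nat.ceil (dist x o) : ℝ) := Nat.le_ceil _
          _ ≤ (n : ℝ) := by exact_mod_cast hn
          _ ≤ (n : ℝ) + 1 := by linarith
      exact le_of_lt (hq n x hxball)
  · -- part (b)
    intro htb p
    induction p using Filter.Germ.inductionOn with
    | h f =>
    set g : X → ℕ → ℝ := fun x n => δ (f n) x - δ (f n) o with hg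
    have heq : ∀ x : X, starMap₂ δ (↑f) ↑x - starMap₂ δ (↑f) ↑o =
        Hyperreal.ofSeq (g x) := fun x => rfl
    -- each standard-part value exists
    have hfin : ∀ x : X, ∃ r : ℝ, Hyperreal.IsSt (Hyperreal.ofSeq (g x)) r := by
      intro x
      apply Hyperreal.exists_st_of_not_infinite
      rw [Hyperreal.not_infinite_iff_exist_lt_gt]
      refine ⟨-(β * dist x o) - 1, β * dist x o + 1, ?_, ?_⟩
      · show Hyperreal.ofSeq (fun _ => -(β * dist x o) - 1) < Hyperreal.ofSeq (g x)
        rw [Hyperreal.ofSeq_lt_ofSeq]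
        apply Eventually.of_forall
        intro n
        have := key (f n) x o
        simp only [sub_self, sub_zero] at this
        have := abs_le.1 this
        have : -(β * dist x o) ≤ g x n := by simpa [hg] using this.1
        linarith
      · show Hyperreal.ofSeq (g x) < Hyperreal.ofSeq (fun _ => β * dist x o + 1)
        rw [Hyperreal.ofSeq_lt_ofSeq]
        apply Eventually.of_forall
        intro n
        have := key (f n) x o
        simp only [sub_self, sub_zero] at this
        have : g x n ≤ β * dist x o := by simpa [hg] using (abs_le.1 this).2
        linarith
    set h : X → ℝ := fun x => Hyperreal.st (starMap₂ δ (↑f) ↑x - starMap₂ δ (↑f) ↑o) with hh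
    have hst : ∀ x : X, Hyperreal.IsSt (Hyperreal.ofSeq (g x)) (h x) := by
      intro x
      rw [hh]
      simp only [heq x]
      exact Hyperreal.isSt_st_of_exists_st (hfin x)
    -- h is Lipschitz with constant β
    have hlip : ∀ x y : X, |h x - h y| ≤ β * dist x y := by
      intro x y
      have hsub : Hyperreal.IsSt (Hyperreal.ofSeq (g x) - Hyperreal.ofSeq (g y)) (h x - h y) :=
        (hst x).sub (hst y)
      have hsub' : Hyperreal.ofSeq (g x) - Hyperreal.ofSeq (g y) =
          Hyperreal.ofSeq (fun n => g x n - g y n) := rfl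
      rw [hsub'] at hsub
      rw [abs_le]
      constructor
      · have hle : Hyperreal.ofSeq (fun _ => -(β * dist x y)) ≤
            Hyperreal.ofSeq (fun n => g x n - g y n) :=
          Filter.Germ.coe_le.2 (Eventually.of_forall fun n => neg_le_of_abs_le (key (f n) x y))
        have := (Hyperreal.isSt_refl_real (-(β * dist x y))).le hsub hle
        linarith
      · have hle : Hyperreal.ofSeq (fun n => g x n - g y n) ≤
            Hyperreal.ofSeq (fun _ => β * dist x y) :=
          Filter.Germ.coe_le.2 (Eventually.of_forall fun n => le_of_abs_le (key (f n) x y))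
        exact hsub.le (Hyperreal.isSt_refl_real (β * dist x y)) hle
    -- closure membership
    rw [mem_closure_iff_nhds_basis
      (UniformOnFun.hasBasis_nhds_of_basis X ℝ 𝔖 (UniformOnFun.ofFun 𝔖 h) hne hdir
        Metric.uniformity_basis_dist)]
    rintro ⟨S, ε⟩ ⟨hS, hε⟩
    set ε' : ℝ := ε / (2 * β + 2) with hε'
    have hε'pos : 0 < ε' := by positivity
    obtain ⟨t, htfin, htcov⟩ := Metric.totallyBounded_iff.1 (htb S hS) ε' hε'pos
    -- pick an index where all the approximations at the net points are good
    have hmem : ∀ c ∈ t, {n : ℕ | dist (g c n) (h c) < ε'} ∈ hyperfilter ℕ := by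
      intro c _
      have : Tendsto (g c) (hyperfilter ℕ) (nhds (h c)) :=
        Hyperreal.isSt_ofSeq_iff_tendsto.1 (hst c)
      exact this (Metric.ball_mem_nhds (h c) hε'pos)
    have hInter : (⋂ c ∈ t, {n : ℕ | dist (g c n) (h c) < ε'}) ∈ hyperfilter ℕ :=
      (Filter.biInter_mem htfin).2 hmem
    obtain ⟨n₀, hn₀⟩ := Filter.nonempty_of_mem hInter
    refine ⟨UniformOnFun.ofFun 𝔖 (fun x => δ (f n₀) x - δ (f n₀) o), ⟨_, ⟨f n₀, rfl⟩, rfl⟩, ?_⟩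
    intro x hxS
    obtain ⟨c, hct, hxc⟩ := Set.mem_iUnion₂.1 (htcov hxS)
    rw [Metric.mem_ball] at hxc
    have h1 : dist (g x n₀) (g c n₀) ≤ β * dist x c := by
      rw [Real.dist_eq]
      exact key (f n₀) x c
    have h2 : dist (g c n₀) (h c) < ε' := by
      have := Set.mem_iInter₂.1 hn₀ c hct
      exact this
    have h3 : dist (h c) (h x) ≤ β * dist x c := by
      calc dist (h c) (h x) = |h x - h c| := by rw [Real.dist_eq, abs_sub_comm]
        _ ≤ β * dist x c := hlip x c
    have : dist (g x n₀) (h x) < ε := by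
      calc dist (g x n₀) (h x) ≤ dist (g x n₀) (g c n₀) + dist (g c n₀) (h c) + dist (h c) (h x) :=
            dist_triangle4 _ _ _ _
        _ ≤ β * dist x c + ε' + β * dist x c := by linarith
        _ < β * ε' + ε' + β * ε' := by
            have hβ0 : 0 ≤ β := le_of_lt hβ
            nlinarith
        _ ≤ ε := by
            have hq : (2 * β + 2) * ε' = ε := by
              rw [hε']; field_simp
            nlinarith [hε'pos.le]
    exact this
end

section
/- Let (X,d) be a metric space in which every bounded subset is totally bounded, let δ be an asymmetric metric on X, and let A ⊆ X be a closed subset such that both δ (with respect to d on X) and the restriction of δ to A × A (with respect to the restriction of d to A) satisfy conditions (bl) and (ic). Let o ∈ A. Then every normalized horofunction of (A, d|_A, δ|_{A×A}) with base point o is the restriction to A of some normalized horofunction of (X, d, δ) with base point o. -/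
open Bornology

open Filter Set Metric Topology UniformConvergence in
/-- Let `(X,d)` be a metric space in which every bounded set is totally
bounded, `δ` an asymmetric metric on `X`, and `A ⊆ X` a closed subset such that both `δ`
and its restriction to `A` satisfy (bl) and (ic). Let `o ∈ A`. Then every normalized
horofunction of `A` (with respect to the restricted data) is the restriction to `A` of a
normalized horofunction of `X`. -/
theorem horofunction_restriction
    {X : Type*} [MetricSpace X] (δ : X → X → ℝ)
    (halmostproper : ∀ s : Set X, IsBounded s → TotallyBounded s)
    (hpos : ∀ u v, 0 ≤ δ u v)
    (hzero : ∀ u v, δ u v = 0 ↔ u = v)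
    (htri : ∀ u v w, δ u w ≤ δ u v + δ v w)
    (A : Set X) (hAclosed : IsClosed A) (o : X) (ho : o ∈ A)
    (hblX : ∃ α > (0 : ℝ), ∃ β > (0 : ℝ), ∀ p q : X,
      dist p q ≤ α * δ p q ∧ δ p q ≤ β * dist p q)
    (hicX : ∀ p q : X, ∀ s : ℝ, s ∈ Set.Icc 0 (δ p q) →
      ∃ z : X, δ p q = δ p z + δ z q ∧ δ p z = s)
    (hblA : ∃ α > (0 : ℝ), ∃ β > (0 : ℝ), ∀ p q : A,
      dist p q ≤ α * δ ↑p ↑q ∧ δ ↑p ↑q ≤ β * dist p q)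
    (hicA : ∀ p q : A, ∀ s : ℝ, s ∈ Set.Icc 0 (δ ↑p ↑q) →
      ∃ z : A, δ ↑p ↑q = δ ↑p ↑z + δ ↑z ↑q ∧ δ ↑p ↑z = s) :
    ∀ φ : A → ℝ,
      UniformOnFun.ofFun {s : Set A | IsBounded s} φ ∈
        closure (UniformOnFun.ofFun {s : Set A | IsBounded s} ''
          {f : A → ℝ | ∃ p : A, f = fun x : A => δ ↑p ↑x - δ ↑p o}) →
      ∃ ψ : X → ℝ,
        UniformOnFun.ofFun {s : Set X | IsBounded s} ψ ∈
          closure (UniformOnFun.ofFun {s : Set X | IsBounded s} ''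
            {f : X → ℝ | ∃ p : X, f = fun x => δ p x - δ p o}) ∧
        ∀ a : A, φ a = ψ ↑a := by
  obtain ⟨α, hα, β, hβ, hX⟩ := hblX
  intro φ hφ
  set 𝔖A : Set (Set A) := {s : Set A | IsBounded s} with h𝔖A
  set 𝔖X : Set (Set X) := {s : Set X | IsBounded s} with h𝔖X
  set g : A → (A →ᵤ[𝔖A] ℝ) :=
    fun p => UniformOnFun.ofFun 𝔖A (fun x : A => δ ↑p ↑x - δ ↑p o) with hg
  -- the target set is the range of `g`
  have himg : (UniformOnFun.ofFun 𝔖A ''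
      {f : A → ℝ | ∃ p : A, f = fun x : A => δ ↑p ↑x - δ ↑p o}) = Set.range g := by
    ext y
    constructor
    · rintro ⟨f, ⟨p, rfl⟩, rfl⟩; exact ⟨p, rfl⟩
    · rintro ⟨p, rfl⟩; exact ⟨_, ⟨p, rfl⟩, rfl⟩
  rw [himg] at hφ
  -- an ultrafilter on `A` pushing forward to a filter converging to `φ`
  haveI hne : (comap g (𝓝 (UniformOnFun.ofFun 𝔖A φ))).NeBot := by
    rw [comap_neBot_iff]
    intro t ht
    obtain ⟨y, hy1, p, rfl⟩ := mem_closure_iff_nhds.1 hφ t ht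
    exact ⟨p, hy1⟩
  set 𝒰 : Ultrafilter A := Ultrafilter.of (comap g (𝓝 (UniformOnFun.ofFun 𝔖A φ))) with h𝒰def
  have h𝒰 : Tendsto g ↑𝒰 (𝓝 (UniformOnFun.ofFun 𝔖A φ)) :=
    le_trans (map_mono (Ultrafilter.of_le _)) map_comap_le
  -- basic bounds
  have hbound : ∀ (p : A) (x : X), |δ ↑p x - δ ↑p o| ≤ β * dist x o := by
    intro p x
    rw [abs_le]
    constructor
    · have h1 := htri (↑p) x o
      have h2 := (hX x o).2
      nlinarith [dist_comm x o]
    · have h1 := htri (↑p) o x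
      have h2 := (hX o x).2
      nlinarith [dist_comm o x]
  have hlip : ∀ (p : A) (x y : X),
      |(δ ↑p x - δ ↑p o) - (δ ↑p y - δ ↑p o)| ≤ β * dist x y := by
    intro p x y
    rw [abs_le]
    constructor
    · have h1 := htri (↑p) x y
      have h2 := (hX x y).2
      nlinarith [dist_comm x y]
    · have h1 := htri (↑p) y x
      have h2 := (hX y x).2
      nlinarith [dist_comm y x]
  -- pointwise limits exist along the ultrafilter
  have hexists : ∀ x : X, ∃ r : ℝ, Tendsto (fun p : A => δ ↑p x - δ ↑p o) ↑𝒰 (𝓝 r) := by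
    intro x
    have hc : ↑(𝒰.map (fun p : A => δ ↑p x - δ ↑p o)) ≤
        𝓟 (Set.Icc (-(β * dist x o)) (β * dist x o)) := by
      rw [le_principal_iff]
      exact Filter.mem_map.2 (Filter.Eventually.mono (Filter.univ_mem)
        (fun p _ => abs_le.1 (hbound p x)))
    obtain ⟨r, -, hr⟩ := isCompact_Icc.ultrafilter_le_nhds _ hc
    exact ⟨r, hr⟩
  choose ψ hψ using hexists
  -- ψ is Lipschitz
  have hψlip : ∀ x y : X, |ψ x - ψ y| ≤ β * dist x y := by
    intro x y
    exact le_of_tendsto (((hψ x).sub (hψ y)).abs)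
      (Filter.Eventually.mono Filter.univ_mem (fun p _ => hlip p x y))
  -- uniform convergence on bounded subsets of X
  have huc : ∀ S : Set X, IsBounded S →
      TendstoUniformlyOn (fun (p : A) (x : X) => δ ↑p x - δ ↑p o) ψ ↑𝒰 S := by
    intro S hS
    rw [Metric.tendstoUniformlyOn_iff]
    intro ε hε
    have hr : (0 : ℝ) < ε / (4 * β) := by positivity
    obtain ⟨t, htfin, hcov⟩ := (totallyBounded_iff.1 (halmostproper S hS)) _ hr
    have hev : ∀ᶠ (p : ↥A) in ↑𝒰, ∀ y ∈ t, |(δ ↑p y - δ ↑p o) - ψ y| < ε / 4 := by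
      rw [eventually_all_finite htfin]
      intro y _
      have := (Metric.tendsto_nhds.1 (hψ y)) (ε / 4) (by positivity)
      filter_upwards [this] with p hp
      rw [Real.dist_eq] at hp
      exact hp
    filter_upwards [hev] with p hp x hx
    obtain ⟨y, hyt, hxy⟩ : ∃ y ∈ t, x ∈ Metric.ball y (ε / (4 * β)) := by
      simpa using hcov hx
    rw [Metric.mem_ball] at hxy
    have hβr : β * dist x y ≤ ε / 4 := by
      have : β * dist x y ≤ β * (ε / (4 * β)) :=
        mul_le_mul_of_nonneg_left (le_of_lt hxy) (le_of_lt hβ)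
      calc β * dist x y ≤ β * (ε / (4 * β)) := this
        _ = ε / 4 := by field_simp
    have h1 := hψlip x y
    have h2 := hp y hyt
    have h3 := hlip p y x
    have h4 : dist y x = dist x y := dist_comm y x
    rw [Real.dist_eq]
    have : |ψ x - (δ ↑p x - δ ↑p o)| ≤
        |ψ x - ψ y| + |ψ y - (δ ↑p y - δ ↑p o)| + |(δ ↑p y - δ ↑p o) - (δ ↑p x - δ ↑p o)| := by
      calc |ψ x - (δ ↑p x - δ ↑p o)|
          = |(ψ x - ψ y) + (ψ y - (δ ↑p y - δ ↑p o)) + ((δ ↑p y - δ ↑p o) - (δ ↑p x - δ ↑p o))| := by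
            ring_nf
        _ ≤ _ := by
            exact le_trans (abs_add_le _ _) (add_le_add_left (abs_add_le _ _) _)
    have h2' : |ψ y - (δ ↑p y - δ ↑p o)| < ε / 4 := by
      rw [abs_sub_comm]; exact h2
    have h3' : |(δ ↑p y - δ ↑p o) - (δ ↑p x - δ ↑p o)| ≤ ε / 4 := by
      calc |(δ ↑p y - δ ↑p o) - (δ ↑p x - δ ↑p o)| ≤ β * dist y x := h3
        _ = β * dist x y := by rw [h4]
        _ ≤ ε / 4 := hβr
    have h1' : |ψ x - ψ y| ≤ ε / 4 := le_trans h1 hβr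
    linarith
  -- tendsto in the X function space
  have hXtend : Tendsto (fun p : A => UniformOnFun.ofFun 𝔖X (fun x => δ ↑p x - δ ↑p o)) ↑𝒰
      (𝓝 (UniformOnFun.ofFun 𝔖X ψ)) := by
    rw [UniformOnFun.tendsto_iff_tendstoUniformlyOn]
    exact fun S hS => huc S hS
  refine ⟨ψ, ?_, ?_⟩
  · exact mem_closure_of_tendsto hXtend
      (Filter.Eventually.mono Filter.univ_mem (fun p _ => ⟨_, ⟨↑p, rfl⟩, rfl⟩))
  · intro a
    have hsing : ({a} : Set A) ∈ 𝔖A := by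
      simp only [h𝔖A, Set.mem_setOf_eq]
      exact isBounded_singleton
    have h1 : Tendsto (fun p : A => δ ↑p ↑a - δ ↑p o) ↑𝒰 (𝓝 (φ a)) := by
      rw [UniformOnFun.tendsto_iff_tendstoUniformlyOn] at h𝒰
      exact (h𝒰 {a} hsing).tendsto_at (Set.mem_singleton a)
    exact tendsto_nhds_unique h1 (hψ ↑a)
end

section
/- Let L ⊆ K be a dual face and let w ∈ V. Then ν_L(u − w) − ν_L(−w) = ν_L(u) holds for all u ∈ V if and only if w ∈ H_L. -/
open Bornology

/-- The polyhedral asymmetric norm `ν(u) = max {ξ_k(u) : k ∈ K}`. -/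
noncomputable def nu {V : Type*} [AddCommGroup V] [Module ℝ V] {m : ℕ}
    (ξ : Fin (m + 1) → V →ₗ[ℝ] ℝ) (u : V) : ℝ :=
  Finset.univ.sup' Finset.univ_nonempty fun k => ξ k u

/-- `ν_L(u) = max {ξ_ℓ(u) : ℓ ∈ L}` (junk value `0` for `L = ∅`). -/
noncomputable def nuL {V : Type*} [AddCommGroup V] [Module ℝ V] {m : ℕ}
    (ξ : Fin (m + 1) → V →ₗ[ℝ] ℝ) (L : Finset (Fin (m + 1))) (u : V) : ℝ :=
  if h : L.Nonempty then L.sup' h fun ℓ => ξ ℓ u else 0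

/-- `L ⊆ K` is a dual face if there is `v` with `ν(v) = 1` and `L = {k : ξ_k(v) = 1}`. -/
def IsDualFace {V : Type*} [AddCommGroup V] [Module ℝ V] {m : ℕ}
    (ξ : Fin (m + 1) → V →ₗ[ℝ] ℝ) (L : Finset (Fin (m + 1))) : Prop :=
  ∃ v : V, nu ξ v = 1 ∧ ∀ k, k ∈ L ↔ ξ k v = 1

/-- `H_L = {u : ξ_k(u) = ξ_ℓ(u) for all k, ℓ ∈ L}`. -/
def HL {V : Type*} [AddCommGroup V] [Module ℝ V] {m : ℕ}
    (ξ : Fin (m + 1) → V →ₗ[ℝ] ℝ) (L : Finset (Fin (m + 1))) : Set V :=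
  {u : V | ∀ k ∈ L, ∀ l ∈ L, ξ k u = ξ l u}

private lemma sup'_sub_const {α : Type*} (L : Finset α) (h : L.Nonempty)
    (f : α → ℝ) (c : ℝ) :
    (L.sup' h fun a => f a - c) = L.sup' h f - c := by
  apply le_antisymm
  · exact Finset.sup'_le _ _ fun a ha => sub_le_sub_right (Finset.le_sup' f ha) c
  · rw [sub_le_iff_le_add]
    refine Finset.sup'_le _ _ fun a ha => ?_
    have := Finset.le_sup' (fun a => f a - c) ha
    linarith

/-- Let `L ⊆ K` be a dual face and `w ∈ V`. Then
`ν_L(u − w) − ν_L(−w) = ν_L(u)` holds for all `u ∈ V` if and only if `w ∈ H_L`. -/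
theorem nuL_translation_stabilizer
    {V : Type*} [NormedAddCommGroup V] [InnerProductSpace ℝ V] [FiniteDimensional ℝ V]
    {m : ℕ} (ξ : Fin (m + 1) → V →ₗ[ℝ] ℝ)
    (hfacet : ∀ k, ∃ u : V, ξ k u = 1 ∧ ∀ l, l ≠ k → ξ l u < 1)
    (hpos : ∀ u : V, u ≠ 0 → 0 < nu ξ u)
    (L : Finset (Fin (m + 1))) (hL : IsDualFace ξ L) (w : V) :
    (∀ u : V, nuL ξ L (u - w) - nuL ξ L (-w) = nuL ξ L u) ↔ w ∈ HL ξ L := by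
  obtain ⟨v, hv1, hvL⟩ := hL
  have hLne : L.Nonempty := by
    obtain ⟨k, -, hk⟩ := Finset.exists_mem_eq_sup' (Finset.univ_nonempty)
      (fun k : Fin (m + 1) => ξ k v)
    exact ⟨k, (hvL k).mpr (by rw [← hk]; exact hv1)⟩
  have hnuL : ∀ u : V, nuL ξ L u = L.sup' hLne fun ℓ => ξ ℓ u := by
    intro u; simp [nuL, hLne]
  constructor
  · intro h
    have key : ∀ k ∈ L, ξ k w = -nuL ξ L (-w) := by
      intro k hk
      obtain ⟨u, hu1, hult⟩ := hfacet k
      -- choose t large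
      obtain ⟨t, ht1, htmax⟩ : ∃ t : ℝ, 1 ≤ t ∧
          ∀ l ∈ L, (ξ k w - ξ l w) / (1 - ξ l u) ≤ t :=
        ⟨max 1 (L.sup' hLne fun l => (ξ k w - ξ l w) / (1 - ξ l u)), le_max_left _ _,
          fun l hl => le_trans (Finset.le_sup' (fun l => (ξ k w - ξ l w) / (1 - ξ l u)) hl) (le_max_right _ _)⟩
      have htpos : (0 : ℝ) < t := lt_of_lt_of_le one_pos ht1
      have hbound : ∀ l ∈ L, t * ξ l u - ξ l w ≤ t - ξ k w := by
        intro l hl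
        rcases eq_or_ne l k with rfl | hne
        · rw [hu1]; ring_nf; exact le_refl _
        · have hlt : ξ l u < 1 := hult l hne
          have hpos' : 0 < 1 - ξ l u := by linarith
          have h2 := (div_le_iff₀ hpos').mp (htmax l hl)
          have h3 : t * (1 - ξ l u) = t - t * ξ l u := by ring
          linarith
      have h1 : nuL ξ L (t • u - w) = t - ξ k w := by
        rw [hnuL]
        apply le_antisymm
        · refine Finset.sup'_le _ _ fun l hl => ?_
          simpa [mul_comm] using hbound l hl
        · have := Finset.le_sup' (fun ℓ => ξ ℓ (t • u - w)) hk
          simpa only [map_sub, map_smul, smul_eq_mul, hu1, mul_one] using this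
      have h2 : nuL ξ L (t • u) = t := by
        rw [hnuL]
        apply le_antisymm
        · refine Finset.sup'_le _ _ fun l hl => ?_
          rcases eq_or_ne l k with rfl | hne
          · simp [hu1]
          · have := hult l hne
            simp only [map_smul, smul_eq_mul]
            nlinarith
        · have := Finset.le_sup' (fun ℓ => ξ ℓ (t • u)) hk
          simpa only [map_smul, smul_eq_mul, hu1, mul_one] using this
      have := h (t • u)
      rw [h1, h2] at this
      linarith
    intro k hk l hl
    rw [key k hk, key l hl]
  · intro hw u
    have hc : ∀ l ∈ L, ξ l w = ξ hLne.choose w := fun l hl => hw l hl _ hLne.choose_spec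
    set c := ξ hLne.choose w with hcdef
    have e1 : nuL ξ L (u - w) = nuL ξ L u - c := by
      rw [hnuL, hnuL, ← sup'_sub_const L hLne (fun ℓ => ξ ℓ u) c]
      refine Finset.sup'_congr _ rfl fun l hl => ?_
      rw [map_sub, hc l hl]
    have e2 : nuL ξ L (-w) = -c := by
      rw [hnuL]
      have : (L.sup' hLne fun ℓ => ξ ℓ (-w)) = L.sup' hLne fun _ => -c := by
        refine Finset.sup'_congr _ rfl fun l hl => ?_
        rw [map_neg, hc l hl]
      rw [this, Finset.sup'_const]
    rw [e1, e2]; ring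
end

section
/- Let L, L' ⊆ K be two distinct dual faces and let p ∈ V. Then: (a) there exists u ∈ V with ν_L(p−u) − ν_L(p) ≠ ν(−u); and (b) there exists u ∈ V with ν_L(p−u) − ν_L(p) ≠ ν_{L'}(−u). -/
open Bornology

section Aux
variable {V : Type*} [AddCommGroup V] [Module ℝ V] {m : ℕ}
  (ξ : Fin (m + 1) → V →ₗ[ℝ] ℝ) {L : Finset (Fin (m + 1))}

lemma nuL_eq (h : L.Nonempty) (u : V) :
    nuL ξ L u = L.sup' h fun ℓ => ξ ℓ u := dif_pos h

lemma le_nuL (h : L.Nonempty) {k} (hk : k ∈ L) (u : V) : ξ k u ≤ nuL ξ L u := by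
  rw [nuL_eq ξ h]; exact Finset.le_sup' (fun ℓ => ξ ℓ u) hk

lemma nuL_add_le (h : L.Nonempty) (a b : V) :
    nuL ξ L (a + b) ≤ nuL ξ L a + nuL ξ L b := by
  simp only [nuL_eq ξ h]
  apply Finset.sup'_le
  intro ℓ hℓ
  rw [map_add]
  exact add_le_add (Finset.le_sup' (fun ℓ => ξ ℓ a) hℓ) (Finset.le_sup' (fun ℓ => ξ ℓ b) hℓ)

lemma nuL_smul (h : L.Nonempty) {t : ℝ} (ht : 0 ≤ t) (u : V) :
    nuL ξ L (t • u) = t * nuL ξ L u := by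
  simp only [nuL_eq ξ h]
  rw [Finset.comp_sup'_eq_sup'_comp h (fun x : ℝ => t * x)
    (fun a b => mul_max_of_nonneg a b ht)]
  refine Finset.sup'_congr h rfl ?_
  intro ℓ _
  simp

lemma nuL_const (h : L.Nonempty) {c : ℝ} {w : V} (hw : ∀ ℓ ∈ L, ξ ℓ w = c) :
    nuL ξ L w = c := by
  rw [nuL_eq ξ h, Finset.sup'_congr h rfl hw, Finset.sup'_const]

lemma nuL_lt (h : L.Nonempty) {c : ℝ} {w : V} (hw : ∀ ℓ ∈ L, ξ ℓ w < c) :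
    nuL ξ L w < c := by
  rw [nuL_eq ξ h]
  exact (Finset.sup'_lt_iff h).2 hw

lemma dualFace_nonempty {L : Finset (Fin (m + 1))} (hL : IsDualFace ξ L) : L.Nonempty := by
  obtain ⟨v, hv1, hvL⟩ := hL
  obtain ⟨k, _, hk⟩ := Finset.exists_mem_eq_sup' (Finset.univ_nonempty
    (α := Fin (m + 1))) (fun k => ξ k v)
  exact ⟨k, (hvL k).2 (by rw [← hk, ← hv1]; rfl)⟩

lemma nu_zero : nu ξ 0 = 0 := by
  unfold nu
  rw [Finset.sup'_congr Finset.univ_nonempty rfl (fun k _ => map_zero (ξ k)),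
    Finset.sup'_const]

lemma forall_pos_mul_le_imp_nonpos {d C : ℝ} (h : ∀ t : ℝ, 0 < t → t * d ≤ C) :
    d ≤ 0 := by
  by_contra hd
  push_neg at hd
  have ht : (0:ℝ) < (|C| + 1) / d := by positivity
  have h2 := h _ ht
  rw [div_mul_cancel₀ _ (ne_of_gt hd)] at h2
  have := le_abs_self C
  linarith

end Aux

/-- Let `L, L' ⊆ K` be two distinct dual faces and `p ∈ V`. Then the
translated horofunction `u ↦ ν_L(p−u) − ν_L(p)` differs from `u ↦ ν(−u)` and from
`u ↦ ν_{L'}(−u)`. -/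
theorem translated_nuL_horofunctions_distinct
    {V : Type*} [NormedAddCommGroup V] [InnerProductSpace ℝ V] [FiniteDimensional ℝ V]
    {m : ℕ} (ξ : Fin (m + 1) → V →ₗ[ℝ] ℝ)
    (hfacet : ∀ k, ∃ u : V, ξ k u = 1 ∧ ∀ l, l ≠ k → ξ l u < 1)
    (hpos : ∀ u : V, u ≠ 0 → 0 < nu ξ u)
    (L L' : Finset (Fin (m + 1))) (hL : IsDualFace ξ L) (hL' : IsDualFace ξ L')
    (hne : L ≠ L') (p : V) :
    (∃ u : V, nuL ξ L (p - u) - nuL ξ L p ≠ nu ξ (-u)) ∧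
    (∃ u : V, nuL ξ L (p - u) - nuL ξ L p ≠ nuL ξ L' (-u)) := by
  have hLne : L.Nonempty := dualFace_nonempty ξ hL
  have hL'ne : L'.Nonempty := dualFace_nonempty ξ hL'
  obtain ⟨v, hv1, hvL⟩ := hL
  constructor
  · -- part (a)
    set t : ℝ := |nuL ξ L p| + 1 with ht
    refine ⟨p + t • v, ?_⟩
    have h1 : p - (p + t • v) = -(t • v) := by abel
    have h2 : nuL ξ L (-(t • v)) = -t := by
      refine nuL_const ξ hLne ?_
      intro ℓ hℓ
      have : ξ ℓ v = 1 := (hvL ℓ).1 hℓ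
      simp [this]
    have h3 : 0 ≤ nu ξ (-(p + t • v)) := by
      rcases eq_or_ne (p + t • v) 0 with h | h
      · rw [h, neg_zero, nu_zero]
      · exact le_of_lt (hpos _ (neg_ne_zero.2 h))
    rw [h1, h2]
    have := abs_nonneg (nuL ξ L p)
    have := le_abs_self (nuL ξ L p)
    have := neg_abs_le (nuL ξ L p)
    intro hcontra
    rw [← hcontra] at h3
    linarith
  · -- part (b)
    by_contra hcon
    push_neg at hcon
    -- translation formula: nuL L w = nuL L' (w - p) + nuL L p for all w
    have key : ∀ w : V, nuL ξ L w = nuL ξ L' (w - p) + nuL ξ L p := by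
      intro w
      have := hcon (p - w)
      have e1 : p - (p - w) = w := by abel
      have e2 : -(p - w) = w - p := by abel
      rw [e1, e2] at this
      linarith
    -- a point where nuL L and nuL L' differ
    have hdiff : ∃ u₀ : V, nuL ξ L u₀ ≠ nuL ξ L' u₀ := by
      obtain ⟨v', hv'1, hv'L⟩ := hL'
      have : ∃ k, (k ∈ L ∧ k ∉ L') ∨ (k ∈ L' ∧ k ∉ L) := by
        by_contra hc
        push_neg at hc
        apply hne
        ext k
        have := hc k
        tauto
      obtain ⟨k, hk | hk⟩ := this
      · obtain ⟨u₀, hu1, hu2⟩ := hfacet k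
        refine ⟨u₀, ne_of_gt ?_⟩
        have hA : (1:ℝ) ≤ nuL ξ L u₀ := hu1 ▸ le_nuL ξ hLne hk.1 u₀
        have hB : nuL ξ L' u₀ < 1 :=
          nuL_lt ξ hL'ne fun ℓ hℓ => hu2 ℓ (fun h => hk.2 (h ▸ hℓ))
        linarith
      · obtain ⟨u₀, hu1, hu2⟩ := hfacet k
        refine ⟨u₀, ne_of_lt ?_⟩
        have hA : (1:ℝ) ≤ nuL ξ L' u₀ := hu1 ▸ le_nuL ξ hL'ne hk.1 u₀
        have hB : nuL ξ L u₀ < 1 :=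
          nuL_lt ξ hLne fun ℓ hℓ => hu2 ℓ (fun h => hk.2 (h ▸ hℓ))
        linarith
    obtain ⟨u₀, hu₀⟩ := hdiff
    -- but the translation formula forces nuL L = nuL L'
    apply hu₀
    set d : ℝ := nuL ξ L u₀ - nuL ξ L' u₀ with hd
    have hub : ∀ t : ℝ, 0 < t → t * d ≤ nuL ξ L' (-p) + nuL ξ L p := by
      intro t ht
      have h1 : nuL ξ L (t • u₀) = t * nuL ξ L u₀ := nuL_smul ξ hLne ht.le u₀
      have h2 : nuL ξ L' (t • u₀) = t * nuL ξ L' u₀ := nuL_smul ξ hL'ne ht.le u₀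
      have h3 := key (t • u₀)
      have h4 : nuL ξ L' (t • u₀ - p) ≤ nuL ξ L' (t • u₀) + nuL ξ L' (-p) := by
        have := nuL_add_le ξ hL'ne (t • u₀) (-p)
        rwa [← sub_eq_add_neg] at this
      rw [h2] at h4
      rw [hd, mul_sub]
      linarith
    have hlb : ∀ t : ℝ, 0 < t → t * (-d) ≤ nuL ξ L' p - nuL ξ L p := by
      intro t ht
      have h1 : nuL ξ L (t • u₀) = t * nuL ξ L u₀ := nuL_smul ξ hLne ht.le u₀
      have h2 : nuL ξ L' (t • u₀) = t * nuL ξ L' u₀ := nuL_smul ξ hL'ne ht.le u₀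
      have h3 := key (t • u₀)
      have h4 : nuL ξ L' (t • u₀) ≤ nuL ξ L' (t • u₀ - p) + nuL ξ L' p := by
        have := nuL_add_le ξ hL'ne (t • u₀ - p) p
        rwa [sub_add_cancel] at this
      rw [h1, h2] at *
      rw [hd, mul_neg, mul_sub]
      linarith
    have hd1 : d ≤ 0 := forall_pos_mul_le_imp_nonpos hub
    have hd2 : -d ≤ 0 := forall_pos_mul_le_imp_nonpos hlb
    have : d = 0 := le_antisymm hd1 (by linarith)
    rw [hd] at this
    linarith
end

section
/- Let L ⊆ K be a dual face. Then there exists a linear subspace W ⊆ V such that V is the direct sum of H_L and W (i.e. H_L ∩ W = {0} and H_L + W = V) and such that ν_L(w) > 0 for every nonzero w ∈ W (so that the restriction of ν_L to W is an asymmetric norm on W). -/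
open Bornology

/-- Let `L ⊆ K` be a dual face. Then there is a linear subspace `W ⊆ V`
with `V = H_L ⊕ W` (that is, `H_L ∩ W = {0}` and `H_L + W = V`) such that `ν_L` is positive
on all nonzero vectors of `W`, i.e. `ν_L` restricts to an asymmetric norm on `W`. -/
theorem exists_complement_on_which_nuL_is_norm
    {V : Type*} [NormedAddCommGroup V] [InnerProductSpace ℝ V] [FiniteDimensional ℝ V]
    {m : ℕ} (ξ : Fin (m + 1) → V →ₗ[ℝ] ℝ)
    (hfacet : ∀ k, ∃ u : V, ξ k u = 1 ∧ ∀ l, l ≠ k → ξ l u < 1)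
    (hpos : ∀ u : V, u ≠ 0 → 0 < nu ξ u)
    (L : Finset (Fin (m + 1))) (hL : IsDualFace ξ L) :
    ∃ W : Submodule ℝ V,
      (∀ v : V, v ∈ HL ξ L → v ∈ W → v = 0) ∧
      (∀ v : V, ∃ h w : V, h ∈ HL ξ L ∧ w ∈ W ∧ v = h + w) ∧
      (∀ w : V, w ∈ W → w ≠ 0 → 0 < nuL ξ L w) := by
  classical
  obtain ⟨v₀, hv₀ν, hv₀L⟩ := hL
  -- `L` is nonempty
  have hLne : L.Nonempty := by
    obtain ⟨k, -, hk⟩ := Finset.exists_mem_eq_sup' Finset.univ_nonempty (fun k => ξ k v₀)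
    exact ⟨k, (hv₀L k).mpr (by rw [← hk]; exact hv₀ν.symm ▸ rfl)⟩
  -- the sum functional
  set s : V →ₗ[ℝ] ℝ := ∑ ℓ ∈ L, ξ ℓ with hs
  have hsapp : ∀ u : V, s u = ∑ ℓ ∈ L, ξ ℓ u := by
    intro u; simp [hs, LinearMap.sum_apply]
  have hsv₀ : s v₀ = (L.card : ℝ) := by
    rw [hsapp]
    rw [Finset.sum_congr rfl (fun ℓ hℓ => (hv₀L ℓ).mp hℓ)]
    simp
  have hcard : (L.card : ℝ) ≠ 0 := by
    exact_mod_cast Finset.card_ne_zero_of_mem hLne.choose_spec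
  -- H_L as a submodule
  have hv₀H : v₀ ∈ HL ξ L := by
    intro k hk l hl
    rw [(hv₀L k).mp hk, (hv₀L l).mp hl]
  let H : Submodule ℝ V :=
    { carrier := HL ξ L
      add_mem' := fun {a b} ha hb k hk l hl => by
        simp only [map_add, ha k hk l hl, hb k hk l hl]
      zero_mem' := fun k _ l _ => by simp
      smul_mem' := fun c a ha k hk l hl => by
        simp only [map_smul, ha k hk l hl, smul_eq_mul] }
  let N : Submodule ℝ V := H ⊓ LinearMap.ker s
  refine ⟨Nᗮ ⊓ LinearMap.ker s, ?_, ?_, ?_⟩ <;>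
    [skip; skip; skip]
  case _ =>
    intro x hxH hxW
    have hxN : x ∈ N := ⟨hxH, hxW.2⟩
    have := (Submodule.mem_orthogonal _ _).mp hxW.1 x hxN
    exact inner_self_eq_zero.mp this
  case _ =>
    intro u
    set c : ℝ := s u / (L.card : ℝ) with hc
    have hker : u - c • v₀ ∈ LinearMap.ker s := by
      rw [LinearMap.mem_ker, map_sub, map_smul, hsv₀, smul_eq_mul, hc,
        div_mul_cancel₀ _ hcard, sub_self]
    obtain ⟨a, haN, z, hz, hdecomp⟩ :=
      N.exists_add_mem_mem_orthogonal (u - c • v₀)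
    have hzker : z ∈ LinearMap.ker s := by
      have : z = (u - c • v₀) - a := by rw [hdecomp]; abel
      rw [LinearMap.mem_ker, this, map_sub, (LinearMap.mem_ker.mp hker),
        (LinearMap.mem_ker.mp haN.2), sub_self]
    refine ⟨c • v₀ + a, z, ?_, ⟨hz, hzker⟩, ?_⟩
    · exact H.add_mem (H.smul_mem c hv₀H) haN.1
    · rw [add_assoc, ← hdecomp]; abel
  case _ =>
    intro w hwW hw0
    by_contra hle
    push_neg at hle
    have hsup : L.sup' hLne (fun ℓ => ξ ℓ w) ≤ 0 := by
      have : nuL ξ L w = L.sup' hLne (fun ℓ => ξ ℓ w) := dif_pos hLne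
      linarith [this ▸ hle]
    have hnonpos : ∀ ℓ ∈ L, ξ ℓ w ≤ 0 := fun ℓ hℓ =>
      le_trans (Finset.le_sup' (fun ℓ => ξ ℓ w) hℓ) hsup
    have hsum : ∑ ℓ ∈ L, ξ ℓ w = 0 := by
      rw [← hsapp]; exact LinearMap.mem_ker.mp hwW.2
    have hall : ∀ ℓ ∈ L, ξ ℓ w = 0 :=
      fun ℓ hℓ => (Finset.sum_eq_zero_iff_of_nonpos hnonpos).mp hsum ℓ hℓ
    have hwH : w ∈ HL ξ L := fun k hk l hl => by rw [hall k hk, hall l hl]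
    have hwN : w ∈ N := ⟨hwH, hwW.2⟩
    exact hw0 (inner_self_eq_zero.mp ((Submodule.mem_orthogonal _ _).mp hwW.1 w hwN))
end

section
/- Let p, w ∈ V and put K(w) = {ℓ ∈ K : ξ_ℓ(w) = ν(w)}. Then the family of functions u ↦ ν(p + t·w − u) − ν(p + t·w) converges, as t → ∞, to the function u ↦ ν_{K(w)}(p − u) − ν_{K(w)}(p), uniformly on every bounded subset of V; that is, for every R > 0 and ε > 0 there is T such that for all t ≥ T and all u ∈ V with ‖u‖ ≤ R one has |ν(p + t·w − u) − ν(p + t·w) − (ν_{K(w)}(p − u) − ν_{K(w)}(p))| < ε. -/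
open Bornology

open Classical in
/-- `K(w) = {ℓ ∈ K : ξ_ℓ(w) = ν(w)}`. -/
noncomputable def Kface {V : Type*} [AddCommGroup V] [Module ℝ V] {m : ℕ}
    (ξ : Fin (m + 1) → V →ₗ[ℝ] ℝ) (w : V) : Finset (Fin (m + 1)) :=
  Finset.univ.filter fun ℓ => ξ ℓ w = nu ξ w

/-- For large `t`, the max defining `ν(x + t•w)` is attained on `K(w)`, giving the
exact formula `ν(x + t•w) = t·ν(w) + ν_{K(w)}(x)`. -/
lemma nu_add_smul_eq {V : Type*} [AddCommGroup V] [Module ℝ V] {m : ℕ}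
    (ξ : Fin (m + 1) → V →ₗ[ℝ] ℝ) (w x : V) (t C : ℝ)
    (hC : ∀ k, |ξ k x| ≤ C)
    (ht : ∀ ℓ, ξ ℓ w ≠ nu ξ w → 2 * C + 1 ≤ t * (nu ξ w - ξ ℓ w)) :
    nu ξ (x + t • w) = t * nu ξ w + nuL ξ (Kface ξ w) x := by
  classical
  obtain ⟨k₀, -, hk₀⟩ := Finset.exists_mem_eq_sup' (Finset.univ_nonempty)
    (fun k => ξ k w)
  have hk₀mem : k₀ ∈ Kface ξ w := by
    rw [Kface, Finset.mem_filter]; exact ⟨Finset.mem_univ _, hk₀.symm⟩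
  have hne : (Kface ξ w).Nonempty := ⟨k₀, hk₀mem⟩
  have hC0 : 0 ≤ C := le_trans (abs_nonneg _) (hC k₀)
  rw [nuL, dif_pos hne]
  have hval : ∀ k ∈ Kface ξ w, ξ k (x + t • w) = ξ k x + t * nu ξ w := by
    intro k hk
    have : ξ k w = nu ξ w := by simpa [Kface] using hk
    simp [map_add, map_smul, this, smul_eq_mul, mul_comm]
  have hsub : (Kface ξ w).sup' hne (fun k => ξ k (x + t • w))
      = (Kface ξ w).sup' hne (fun k => ξ k x) + t * nu ξ w :=
    calc (Kface ξ w).sup' hne (fun k => ξ k (x + t • w))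
        = (Kface ξ w).sup' hne (fun k => ξ k x + t * nu ξ w) :=
          Finset.sup'_congr hne rfl hval
      _ = (Kface ξ w).sup' hne (fun k => ξ k x) + t * nu ξ w :=
          (Finset.sup'_add _ _ _ hne).symm
  have hle : nu ξ (x + t • w) = (Kface ξ w).sup' hne (fun k => ξ k (x + t • w)) := by
    apply le_antisymm
    · apply Finset.sup'_le
      intro k _
      by_cases hk : k ∈ Kface ξ w
      · exact Finset.le_sup' (fun k => ξ k (x + t • w)) hk
      · have hkne : ξ k w ≠ nu ξ w := by simpa [Kface] using hk
        have h1 : 2 * C + 1 ≤ t * (nu ξ w - ξ k w) := ht k hkne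
        have h2 : ξ k (x + t • w) = ξ k x + t * ξ k w := by
          simp [map_add, map_smul, smul_eq_mul]
        have h3 : ξ k₀ (x + t • w) = ξ k₀ x + t * nu ξ w := hval k₀ hk₀mem
        have hb1 : ξ k x ≤ C := le_trans (le_abs_self _) (hC k)
        have hb2 : -C ≤ ξ k₀ x := neg_le_of_abs_le (hC k₀)
        have : ξ k (x + t • w) ≤ ξ k₀ (x + t • w) := by
          rw [h2, h3]; nlinarith
        exact le_trans this (Finset.le_sup' (fun k => ξ k (x + t • w)) hk₀mem)
    · exact Finset.sup'_le _ _ fun k _ => Finset.le_sup'_of_le _ (Finset.mem_univ k) le_rfl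
  rw [hle, hsub]; ring

/-- Let `p, w ∈ V` and `K(w) = {ℓ : ξ_ℓ(w) = ν(w)}`. Then the functions
`u ↦ ν(p + t•w − u) − ν(p + t•w)` converge, as `t → ∞`, to
`u ↦ ν_{K(w)}(p − u) − ν_{K(w)}(p)`, uniformly on every bounded subset of `V`. -/
theorem horofunction_limit_along_ray
    {V : Type*} [NormedAddCommGroup V] [InnerProductSpace ℝ V] [FiniteDimensional ℝ V]
    {m : ℕ} (ξ : Fin (m + 1) → V →ₗ[ℝ] ℝ)
    (hfacet : ∀ k, ∃ u : V, ξ k u = 1 ∧ ∀ l, l ≠ k → ξ l u < 1)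
    (hpos : ∀ u : V, u ≠ 0 → 0 < nu ξ u)
    (p w : V) :
    ∀ R > (0 : ℝ), ∀ ε > (0 : ℝ), ∃ T : ℝ, ∀ t : ℝ, T ≤ t → ∀ u : V, ‖u‖ ≤ R →
      |nu ξ (p + t • w - u) - nu ξ (p + t • w) -
        (nuL ξ (Kface ξ w) (p - u) - nuL ξ (Kface ξ w) p)| < ε := by
  classical
  intro R hR ε hε
  -- a uniform bound on `|ξ k (p - u)|` for `‖u‖ ≤ R`:
  set M : ℝ := Finset.univ.sup' Finset.univ_nonempty
    (fun k => ‖LinearMap.toContinuousLinearMap (ξ k)‖) with hM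
  have hM0 : 0 ≤ M := le_trans (norm_nonneg (LinearMap.toContinuousLinearMap (ξ 0)))
    (Finset.le_sup' (fun k => ‖LinearMap.toContinuousLinearMap (ξ k)‖)
      (Finset.mem_univ (0 : Fin (m + 1))))
  set C : ℝ := M * (‖p‖ + R) with hCdef
  have hCbound : ∀ (x : V), ‖x‖ ≤ ‖p‖ + R → ∀ k, |ξ k x| ≤ C := by
    intro x hx k
    have h1 : |ξ k x| = ‖(LinearMap.toContinuousLinearMap (ξ k)) x‖ := by
      simp [Real.norm_eq_abs]
    rw [h1]
    calc ‖(LinearMap.toContinuousLinearMap (ξ k)) x‖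
        ≤ ‖LinearMap.toContinuousLinearMap (ξ k)‖ * ‖x‖ :=
          (LinearMap.toContinuousLinearMap (ξ k)).le_opNorm x
      _ ≤ M * (‖p‖ + R) := by
          exact mul_le_mul (Finset.le_sup' (fun k => ‖LinearMap.toContinuousLinearMap (ξ k)‖)
            (Finset.mem_univ k)) hx (norm_nonneg x) hM0
  set T : ℝ := Finset.univ.sup' Finset.univ_nonempty
    (fun ℓ => if ξ ℓ w = nu ξ w then 0 else (2 * C + 1) / (nu ξ w - ξ ℓ w)) with hT
  refine ⟨T, fun t hTt u hu => ?_⟩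
  have ht : ∀ ℓ, ξ ℓ w ≠ nu ξ w → 2 * C + 1 ≤ t * (nu ξ w - ξ ℓ w) := by
    intro ℓ hℓ
    have hd : 0 < nu ξ w - ξ ℓ w := by
      have : ξ ℓ w ≤ nu ξ w := Finset.le_sup' (fun k => ξ k w) (Finset.mem_univ ℓ)
      cases lt_or_eq_of_le this with
      | inl h => linarith
      | inr h => exact absurd h hℓ
    have hTℓ : (2 * C + 1) / (nu ξ w - ξ ℓ w) ≤ T := by
      have := Finset.le_sup' (fun ℓ' => if ξ ℓ' w = nu ξ w then 0
        else (2 * C + 1) / (nu ξ w - ξ ℓ' w)) (Finset.mem_univ ℓ)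
      rwa [if_neg hℓ] at this
    have htℓ : (2 * C + 1) / (nu ξ w - ξ ℓ w) ≤ t := le_trans hTℓ hTt
    calc 2 * C + 1 = ((2 * C + 1) / (nu ξ w - ξ ℓ w)) * (nu ξ w - ξ ℓ w) := by
          field_simp
      _ ≤ t * (nu ξ w - ξ ℓ w) := by
          exact mul_le_mul_of_nonneg_right htℓ (le_of_lt hd)
  have hC0 : 0 ≤ C := by
    have := hCbound 0 (by rw [norm_zero]; positivity) 0
    simpa using le_trans (abs_nonneg _) this
  have h1 : nu ξ (p + t • w - u) = t * nu ξ w + nuL ξ (Kface ξ w) (p - u) := by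
    have he : p + t • w - u = (p - u) + t • w := by abel
    rw [he]
    refine nu_add_smul_eq ξ w (p - u) t C (hCbound _ ?_) ht
    calc ‖p - u‖ ≤ ‖p‖ + ‖u‖ := norm_sub_le _ _
      _ ≤ ‖p‖ + R := by linarith
  have h2 : nu ξ (p + t • w) = t * nu ξ w + nuL ξ (Kface ξ w) p := by
    have he : p + t • w = p + t • w := rfl
    refine nu_add_smul_eq ξ w p t C (hCbound _ (by linarith [norm_nonneg p])) ht
  rw [h1, h2]
  simpa using hε
end

section
/- Let L ⊆ K be a dual face or L = K, and define c_L : V → V^∨ (the dual space of V) by c_L(p) = (Σ_{ℓ∈L} exp(ξ_ℓ(p))·ξ_ℓ) / (Σ_{ℓ∈L} exp(ξ_ℓ(p))). Then for all p, q ∈ V with p − q ∉ H_L one has (c_L(q) − c_L(p))(q − p) > 0; consequently, c_L(p) = c_L(q) if and only if p − q ∈ H_L. -/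
open Bornology

/-- The generalized moment map
`c_L(p) = (∑_{ℓ∈L} exp(ξ_ℓ(p))·ξ_ℓ) / (∑_{ℓ∈L} exp(ξ_ℓ(p)))`. -/
noncomputable def cL {V : Type*} [AddCommGroup V] [Module ℝ V] {m : ℕ}
    (ξ : Fin (m + 1) → V →ₗ[ℝ] ℝ) (L : Finset (Fin (m + 1))) (p : V) : V →ₗ[ℝ] ℝ :=
  (∑ ℓ ∈ L, Real.exp (ξ ℓ p))⁻¹ • ∑ ℓ ∈ L, Real.exp (ξ ℓ p) • ξ ℓ

lemma expfac_nonneg (x y : ℝ) : 0 ≤ (Real.exp x - Real.exp y) * (x - y) := by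
  rcases le_total x y with h | h
  · nlinarith [Real.exp_le_exp.mpr h]
  · nlinarith [Real.exp_le_exp.mpr h]

lemma expfac_pos {x y : ℝ} (h : x ≠ y) : 0 < (Real.exp x - Real.exp y) * (x - y) := by
  rcases lt_or_gt_of_ne h with h | h
  · nlinarith [Real.exp_lt_exp.mpr h]
  · nlinarith [Real.exp_lt_exp.mpr h]

lemma moment_key {V : Type*} [AddCommGroup V] [Module ℝ V] {m : ℕ}
    (ξ : Fin (m + 1) → V →ₗ[ℝ] ℝ) (L : Finset (Fin (m + 1))) (hLne : L.Nonempty)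
    (p q : V) (hne : ∃ k ∈ L, ∃ l ∈ L, ξ k (q - p) ≠ ξ l (q - p)) :
    0 < (cL ξ L q - cL ξ L p) (q - p) := by
  obtain ⟨k0, hk0, l0, hl0, hkl⟩ := hne
  set t : Fin (m + 1) → ℝ := fun ℓ => ξ ℓ (q - p) with ht
  set a : Fin (m + 1) → ℝ := fun ℓ => Real.exp (ξ ℓ p) with ha
  have hb : ∀ ℓ, Real.exp (ξ ℓ q) = a ℓ * Real.exp (t ℓ) := by
    intro ℓ
    rw [ha, ← Real.exp_add, ht]
    congr 1
    simp [map_sub]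
  have hapos : ∀ ℓ, 0 < a ℓ := fun ℓ => Real.exp_pos _
  have hSp : 0 < ∑ ℓ ∈ L, Real.exp (ξ ℓ p) :=
    Finset.sum_pos (fun ℓ _ => Real.exp_pos _) hLne
  have hSq : 0 < ∑ ℓ ∈ L, Real.exp (ξ ℓ q) :=
    Finset.sum_pos (fun ℓ _ => Real.exp_pos _) hLne
  have happ : ∀ r : V, (cL ξ L r) (q - p)
      = (∑ ℓ ∈ L, Real.exp (ξ ℓ r))⁻¹ * ∑ ℓ ∈ L, Real.exp (ξ ℓ r) * t ℓ := by
    intro r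
    simp [cL, LinearMap.sum_apply, Finset.mul_sum, ht]
  rw [LinearMap.sub_apply, happ, happ, sub_pos, inv_mul_eq_div, inv_mul_eq_div,
    div_lt_div_iff₀ hSp hSq]
  rw [← sub_pos]
  set D : Fin (m + 1) → Fin (m + 1) → ℝ :=
    fun k l => a k * Real.exp (t k) * t k * a l - a k * t k * (a l * Real.exp (t l)) with hDdef
  have hLHS : (∑ ℓ ∈ L, Real.exp (ξ ℓ q) * t ℓ) * (∑ ℓ ∈ L, Real.exp (ξ ℓ p))
      - (∑ ℓ ∈ L, Real.exp (ξ ℓ p) * t ℓ) * (∑ ℓ ∈ L, Real.exp (ξ ℓ q))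
      = ∑ k ∈ L, ∑ l ∈ L, D k l := by
    simp only [hb, Finset.sum_mul_sum, ← Finset.sum_sub_distrib]
    rfl
  rw [hLHS]
  have hswap : ∑ k ∈ L, ∑ l ∈ L, D l k = ∑ k ∈ L, ∑ l ∈ L, D k l := Finset.sum_comm
  have hD : 0 < ∑ k ∈ L, ∑ l ∈ L, (D k l + D l k) := by
    apply Finset.sum_pos'
    · intro k _
      apply Finset.sum_nonneg
      intro l _
      have h0 := expfac_nonneg (t k) (t l)
      have h1 := (hapos k).le
      have h2 := (hapos l).le
      have h3 : D k l + D l k = a k * a l * ((Real.exp (t k) - Real.exp (t l)) * (t k - t l)) := by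
        simp only [hDdef]; ring
      rw [h3]
      exact mul_nonneg (mul_nonneg h1 h2) h0
    · refine ⟨k0, hk0, Finset.sum_pos' ?_ ⟨l0, hl0, ?_⟩⟩
      · intro l _
        have h0 := expfac_nonneg (t k0) (t l)
        have h3 : D k0 l + D l k0
            = a k0 * a l * ((Real.exp (t k0) - Real.exp (t l)) * (t k0 - t l)) := by
          simp only [hDdef]; ring
        rw [h3]
        exact mul_nonneg (mul_nonneg (hapos k0).le (hapos l).le) h0
      · have h0 := expfac_pos hkl
        have h3 : D k0 l0 + D l0 k0
            = a k0 * a l0 * ((Real.exp (t k0) - Real.exp (t l0)) * (t k0 - t l0)) := by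
          simp only [hDdef]; ring
        rw [h3]
        exact mul_pos (mul_pos (hapos k0) (hapos l0)) h0
  have hsum : ∑ k ∈ L, ∑ l ∈ L, (D k l + D l k)
      = ∑ k ∈ L, ∑ l ∈ L, D k l + ∑ k ∈ L, ∑ l ∈ L, D l k := by
    simp [Finset.sum_add_distrib]
  rw [hsum, hswap] at hD
  linarith

lemma cL_eq_of_mem {V : Type*} [AddCommGroup V] [Module ℝ V] {m : ℕ}
    (ξ : Fin (m + 1) → V →ₗ[ℝ] ℝ) (L : Finset (Fin (m + 1))) (hLne : L.Nonempty)
    (p q : V) (h : ∀ k ∈ L, ∀ l ∈ L, ξ k (p - q) = ξ l (p - q)) :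
    cL ξ L p = cL ξ L q := by
  obtain ⟨l0, hl0⟩ := hLne
  set c : ℝ := ξ l0 (p - q) with hc
  have hexp : ∀ ℓ ∈ L, Real.exp (ξ ℓ p) = Real.exp c * Real.exp (ξ ℓ q) := by
    intro ℓ hℓ
    rw [← Real.exp_add]
    congr 1
    have h1 := h ℓ hℓ l0 hl0
    simp only [map_sub] at h1
    rw [hc]
    simp only [map_sub]
    linarith
  have h1 : ∑ ℓ ∈ L, Real.exp (ξ ℓ p) = Real.exp c * ∑ ℓ ∈ L, Real.exp (ξ ℓ q) := by
    rw [Finset.mul_sum]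
    exact Finset.sum_congr rfl hexp
  have h2 : ∑ ℓ ∈ L, Real.exp (ξ ℓ p) • ξ ℓ
      = Real.exp c • ∑ ℓ ∈ L, Real.exp (ξ ℓ q) • ξ ℓ := by
    rw [Finset.smul_sum]
    refine Finset.sum_congr rfl fun ℓ hℓ => ?_
    rw [hexp ℓ hℓ, smul_smul]
  rw [cL, cL, h1, h2, smul_smul]
  congr 1
  rw [mul_inv]
  field_simp

/-- Let `L ⊆ K` be a dual face or `L = K`. Then for all `p, q ∈ V` with
`p − q ∉ H_L` one has `(c_L(q) − c_L(p))(q − p) > 0`; consequently `c_L(p) = c_L(q)` if and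
only if `p − q ∈ H_L`. -/
theorem moment_map_strict_monotonicity
    {V : Type*} [NormedAddCommGroup V] [InnerProductSpace ℝ V] [FiniteDimensional ℝ V]
    {m : ℕ} (ξ : Fin (m + 1) → V →ₗ[ℝ] ℝ)
    (hfacet : ∀ k, ∃ u : V, ξ k u = 1 ∧ ∀ l, l ≠ k → ξ l u < 1)
    (hpos : ∀ u : V, u ≠ 0 → 0 < nu ξ u)
    (L : Finset (Fin (m + 1))) (hL : IsDualFace ξ L ∨ L = Finset.univ) :
    (∀ p q : V, p - q ∉ HL ξ L → 0 < (cL ξ L q - cL ξ L p) (q - p)) ∧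
    (∀ p q : V, cL ξ L p = cL ξ L q ↔ p - q ∈ HL ξ L) := by
  have hLne : L.Nonempty := by
    rcases hL with ⟨v, hv, hmem⟩ | rfl
    · obtain ⟨k, _, hk⟩ := Finset.exists_mem_eq_sup' (Finset.univ_nonempty (α := Fin (m + 1)))
        fun k => ξ k v
      exact ⟨k, (hmem k).mpr (by rw [nu] at hv; rw [← hv, hk])⟩
    · exact Finset.univ_nonempty
  have main : ∀ p q : V, p - q ∉ HL ξ L → 0 < (cL ξ L q - cL ξ L p) (q - p) := by
    intro p q hpq
    apply moment_key ξ L hLne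
    simp only [HL, Set.mem_setOf_eq, not_forall] at hpq
    obtain ⟨k, hk, l, hl, h⟩ := hpq
    refine ⟨k, hk, l, hl, fun hc => h ?_⟩
    have hrw : q - p = -(p - q) := by abel
    rw [hrw, map_neg, map_neg, neg_inj] at hc
    exact hc
  refine ⟨main, fun p q => ⟨fun heq => ?_, fun hmem => cL_eq_of_mem ξ L hLne p q hmem⟩⟩
  by_contra hpq
  have hlt := main p q hpq
  rw [heq] at hlt
  simp at hlt
end
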